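/- Under the SAMP(γ) marginals with γ ∈ [0,1], let H_i := min(1, ∑_{t=1}^T ∑_{f∈F_i} W_{f,t}) be the number of successful assignments involving offline agent i and H := ∑_{i∈I} H_i the total number of successful assignments. Then each H_i is {0,1}-valued with E[H_i] = 1 − ∏_{t=1}^T (1 − γ ∑_{f∈F_i} x_{f,t} p_{f,t}) ≤ γ, and Var[H] ≤ γ̄(1−γ̄)·|I|, where γ̄ := min(1/2, γ). (Theorem: variance analysis of SAMP(γ); here |I| = B is the total matching capacity.) -/

import Mathlib

open MeasureTheory ProbabilityTheory Finset

section samp_helpers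

lemma min_one_sum_eq_ite' {F : Type*} (s : Finset F) (w : F → ℝ)
    (h : ∀ f, w f = 0 ∨ w f = 1) [DecidablePred fun f => w f = 0] :
    min 1 (∑ f ∈ s, w f) = if ∀ f ∈ s, w f = 0 then 0 else 1 := by
  classical
  by_cases hc : ∀ f ∈ s, w f = 0
  · rw [if_pos hc, Finset.sum_congr rfl hc]
    simp
  · rw [if_neg hc]
    push_neg at hc
    obtain ⟨f, hf, hne⟩ := hc
    have hw1 : w f = 1 := (h f).resolve_left hne
    have hle : (1:ℝ) ≤ ∑ g ∈ s, w g := by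
      have := Finset.single_le_sum (f := w)
        (fun g _ => by rcases h g with hg | hg <;> simp [hg]) hf
      linarith
    exact min_eq_left hle

lemma prod_ite_01' {T : Type*} [Fintype T] (c : T → Prop) [DecidablePred c] :
    (∏ t, (if c t then (1:ℝ) else 0)) = if ∀ t, c t then 1 else 0 := by
  by_cases h : ∀ t, c t
  · rw [if_pos h]
    exact Finset.prod_eq_one fun t _ => if_pos (h t)
  · rw [if_neg h]
    push_neg at h
    obtain ⟨t, ht⟩ := h
    exact Finset.prod_eq_zero (Finset.mem_univ t) (if_neg ht)

lemma one_sub_sum_le_prod_aux' {κ : Type*} (s : Finset κ) (b : κ → ℝ)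
    (h0 : ∀ t ∈ s, 0 ≤ b t) (h1 : ∀ t ∈ s, b t ≤ 1) :
    1 - ∑ t ∈ s, b t ≤ ∏ t ∈ s, (1 - b t) := by
  classical
  induction s using Finset.cons_induction with
  | empty => simp
  | cons i s hi ih =>
    rw [Finset.prod_cons, Finset.sum_cons]
    have h0' : ∀ t ∈ s, 0 ≤ b t := fun t ht => h0 t (Finset.mem_cons_of_mem ht)
    have h1' : ∀ t ∈ s, b t ≤ 1 := fun t ht => h1 t (Finset.mem_cons_of_mem ht)
    have ih' := ih h0' h1'
    have hsum : (0:ℝ) ≤ ∑ t ∈ s, b t := Finset.sum_nonneg h0'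
    have hbi : 0 ≤ b i := h0 i (Finset.mem_cons_self i s)
    have hb1 : b i ≤ 1 := h1 i (Finset.mem_cons_self i s)
    nlinarith [mul_le_mul_of_nonneg_left ih' (by linarith : (0:ℝ) ≤ 1 - b i)]

lemma pq_bound' (γ q : ℝ) (h0 : 0 ≤ q) (hpγ : q ≤ γ) (hγ1 : γ ≤ 1) :
    q * (1 - q) ≤ min (1/2) γ * (1 - min (1/2) γ) := by
  rcases le_total γ (1/2) with h | h
  · rw [min_eq_right h]; nlinarith
  · rw [min_eq_left h]; nlinarith [sq_nonneg (q - 1/2)]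

variable {Ω : Type*} [MeasureSpace Ω] [IsProbabilityMeasure (ℙ : Measure Ω)]

lemma integral_finset_prod_of_iIndepFun' {κ : Type*} (g : κ → Ω → ℝ)
    (hmeas : ∀ i, Measurable (g i))
    (hindep : iIndepFun g ℙ) (s : Finset κ) :
    (∫ ω, ∏ i ∈ s, g i ω) = ∏ i ∈ s, ∫ ω, g i ω := by
  classical
  induction s using Finset.cons_induction with
  | empty => simp
  | cons i s hi ih =>
    have hIF : IndepFun (g i) (∏ j ∈ s, g j) ℙ :=
      (hindep.indepFun_finsetProd_of_notMem hmeas hi).symm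
    have heqP : (∏ j ∈ s, g j) = fun a => ∏ j ∈ s, g j a := by
      ext a; exact Finset.prod_apply a s g
    have hPmeas : Measurable (∏ j ∈ s, g j) := by
      rw [heqP]; exact Finset.measurable_prod s fun j _ => hmeas j
    have := hIF.integral_mul_eq_mul_integral (hmeas i).aestronglyMeasurable hPmeas.aestronglyMeasurable
    simp only [Finset.prod_cons]
    rw [← ih]
    calc (∫ ω, g i ω * ∏ j ∈ s, g j ω)
        = ∫ ω, (g i * ∏ j ∈ s, g j) ω := by
          refine integral_congr_ae (Filter.Eventually.of_forall fun ω => ?_)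
          simp [Finset.prod_apply]
      _ = (∫ ω, g i ω) * ∫ ω, (∏ j ∈ s, g j) ω := this
      _ = (∫ ω, g i ω) * ∫ ω, ∏ j ∈ s, g j ω := by
          congr 1
          refine integral_congr_ae (Filter.Eventually.of_forall fun ω => ?_)
          simp [Finset.prod_apply]

lemma round_integral' {F : Type*} [Fintype F] (Wt : F → Ω → ℝ)
    (h01 : ∀ f ω, Wt f ω = 0 ∨ Wt f ω = 1)
    (hmeas : ∀ f, Measurable (Wt f))
    (honce : ∀ᵐ ω ∂ℙ, ∑ f, Wt f ω ≤ 1)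
    (a : F → ℝ) (ha : ∀ f, 0 ≤ a f)
    (hmarg : ∀ f, ℙ {ω | Wt f ω = 1} = ENNReal.ofReal (a f))
    (s : Finset F) :
    (∫ ω, min 1 (∑ f ∈ s, Wt f ω)) = ∑ f ∈ s, a f ∧ (∑ f ∈ s, a f) ≤ 1 := by
  classical
  set A : Set Ω := ⋃ f ∈ s, {ω | Wt f ω = 1} with hA
  have hmem : ∀ f, MeasurableSet {ω | Wt f ω = 1} := fun f =>
    (hmeas f) (measurableSet_singleton 1)
  have hAmeas : MeasurableSet A := MeasurableSet.biUnion s.countable_toSet fun f _ => hmem f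
  have hnull : ℙ {ω | ¬ (∑ f, Wt f ω ≤ 1)} = 0 := by
    simpa [ae_iff] using honce
  have hdisj : (s : Set F).Pairwise
      (Function.onFun (AEDisjoint ℙ) fun f => {ω | Wt f ω = 1}) := by
    intro f _ f' _ hne
    refine measure_mono_null ?_ hnull
    rintro ω ⟨h1, h2⟩
    simp only [Set.mem_setOf_eq] at h1 h2 ⊢
    intro hle
    have hsub : ({f, f'} : Finset F) ⊆ Finset.univ := Finset.subset_univ _
    have hmono := Finset.sum_le_sum_of_subset_of_nonneg (f := fun g => Wt g ω) hsub
      (fun g _ _ => by rcases h01 g ω with hg | hg <;> simp [hg])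
    rw [Finset.sum_pair hne, h1, h2] at hmono
    linarith
  have hmeasure : ℙ A = ENNReal.ofReal (∑ f ∈ s, a f) := by
    rw [hA, measure_biUnion_finset₀ hdisj fun f _ => (hmem f).nullMeasurableSet]
    rw [ENNReal.ofReal_sum_of_nonneg fun f _ => ha f]
    exact Finset.sum_congr rfl fun f _ => hmarg f
  have hsum_nonneg : (0:ℝ) ≤ ∑ f ∈ s, a f := Finset.sum_nonneg fun f _ => ha f
  have hle1 : (∑ f ∈ s, a f) ≤ 1 := by
    have := prob_le_one (μ := ℙ) (s := A)
    rw [hmeasure] at this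
    exact (ENNReal.ofReal_le_one.mp this)
  refine ⟨?_, hle1⟩
  have hind : ∀ ω, min 1 (∑ f ∈ s, Wt f ω) = A.indicator (fun _ => (1:ℝ)) ω := by
    intro ω
    rw [min_one_sum_eq_ite' s (fun f => Wt f ω) (fun f => h01 f ω)]
    by_cases hc : ∀ f ∈ s, Wt f ω = 0
    · rw [if_pos hc, Set.indicator_of_notMem]
      simp only [hA, Set.mem_iUnion, Set.mem_setOf_eq, not_exists]
      intro f hf h1
      rw [hc f hf] at h1; norm_num at h1
    · rw [if_neg hc, Set.indicator_of_mem]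
      push_neg at hc
      obtain ⟨f, hf, hne⟩ := hc
      simp only [hA, Set.mem_iUnion, Set.mem_setOf_eq]
      exact ⟨f, hf, (h01 f ω).resolve_left hne⟩
  calc (∫ ω, min 1 (∑ f ∈ s, Wt f ω)) = ∫ ω, A.indicator (fun _ => (1:ℝ)) ω :=
        integral_congr_ae (Filter.Eventually.of_forall hind)
    _ = (ℙ A).toReal • (1:ℝ) := integral_indicator_const (1:ℝ) hAmeas
    _ = ∑ f ∈ s, a f := by
        rw [hmeasure, ENNReal.toReal_ofReal hsum_nonneg, smul_eq_mul, mul_one]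

end samp_helpers

theorem stmt_13 {Ω : Type*} [MeasureSpace Ω] [IsProbabilityMeasure (ℙ : Measure Ω)]
    {F I : Type*} [Fintype F] [Fintype I] [DecidableEq I]
    (ι : F → I) (T : ℕ)
    (W : Fin T → F → Ω → ℝ)
    (hW01 : ∀ t f ω, W t f ω = 0 ∨ W t f ω = 1)
    (hWmeas : ∀ t f, Measurable (W t f))
    (hindep : iIndepFun
      (fun t ω => fun f => W t f ω) ℙ)
    (honce : ∀ᵐ ω ∂ℙ, ∀ t, ∑ f, W t f ω ≤ 1)
    (γ : ℝ) (hγ : γ ∈ Set.Icc (0 : ℝ) 1)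
    (x p : F → Fin T → ℝ)
    (hx : ∀ f t, x f t ∈ Set.Icc (0 : ℝ) 1) (hp : ∀ f t, p f t ∈ Set.Icc (0 : ℝ) 1)
    (hcap : ∀ i, ∑ t, ∑ f ∈ univ.filter (fun f => ι f = i), x f t * p f t ≤ 1)
    (hmarg : ∀ t f, ℙ {ω | W t f ω = 1} = ENNReal.ofReal (γ * x f t * p f t))
    (H : I → Ω → ℝ)
    (hH : ∀ i ω, H i ω = min 1 (∑ t, ∑ f ∈ univ.filter (fun f => ι f = i), W t f ω)) :
    (∀ i, (∀ ω, H i ω = 0 ∨ H i ω = 1) ∧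
      (∫ ω, H i ω) =
        1 - ∏ t, (1 - γ * ∑ f ∈ univ.filter (fun f => ι f = i), x f t * p f t) ∧
      (∫ ω, H i ω) ≤ γ) ∧
    variance (fun ω => ∑ i, H i ω) ℙ ≤
      min (1 / 2) γ * (1 - min (1 / 2) γ) * (Fintype.card I : ℝ) := by
  classical
  set Fi : I → Finset F := fun i => univ.filter (fun f => ι f = i) with hFi
  -- basic positivity
  have hα0 : ∀ f t, 0 ≤ γ * x f t * p f t := fun f t =>
    mul_nonneg (mul_nonneg hγ.1 (hx f t).1) (hp f t).1
  -- per-round integral and capacity bound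
  have round : ∀ (t : Fin T) (s : Finset F),
      (∫ ω, min 1 (∑ f ∈ s, W t f ω)) = (∑ f ∈ s, γ * x f t * p f t) ∧
        (∑ f ∈ s, γ * x f t * p f t) ≤ 1 := fun t s =>
    round_integral' (fun f => W t f) (fun f ω => hW01 t f ω) (fun f => hWmeas t f)
      (honce.mono fun ω h => h t) _ (fun f => hα0 f t) (fun f => hmarg t f) s
  -- measurability / integrability of per-round indicators
  have hGmeas : ∀ (t : Fin T) (s : Finset F),
      Measurable fun ω => min 1 (∑ f ∈ s, W t f ω) := fun t s =>
    measurable_const.min (Finset.measurable_sum s fun f _ => hWmeas t f)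
  have hGmem : ∀ (t : Fin T) (s : Finset F) (ω : Ω),
      0 ≤ min 1 (∑ f ∈ s, W t f ω) ∧ min 1 (∑ f ∈ s, W t f ω) ≤ 1 := by
    intro t s ω
    refine ⟨le_min zero_le_one (Finset.sum_nonneg fun f _ => ?_), min_le_left _ _⟩
    rcases hW01 t f ω with h | h <;> simp [h]
  have hGint : ∀ (t : Fin T) (s : Finset F),
      Integrable (fun ω => min 1 (∑ f ∈ s, W t f ω)) ℙ := by
    intro t s
    refine Integrable.mono' (integrable_const 1) (hGmeas t s).aestronglyMeasurable
      (Filter.Eventually.of_forall fun ω => ?_)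
    rw [Real.norm_eq_abs, abs_le]
    exact ⟨by linarith [(hGmem t s ω).1], (hGmem t s ω).2⟩
  -- product of rounds
  have hPmeas : ∀ s : Finset F,
      Measurable fun ω => ∏ t, (1 - min 1 (∑ f ∈ s, W t f ω)) := fun s =>
    Finset.measurable_prod univ fun t _ => measurable_const.sub (hGmeas t s)
  have hPmem : ∀ (s : Finset F) (ω : Ω),
      0 ≤ (∏ t, (1 - min 1 (∑ f ∈ s, W t f ω))) ∧
        (∏ t, (1 - min 1 (∑ f ∈ s, W t f ω))) ≤ 1 := by
    intro s ω
    constructor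
    · exact Finset.prod_nonneg fun t _ => by linarith [(hGmem t s ω).2]
    · exact Finset.prod_le_one (fun t _ => by linarith [(hGmem t s ω).2])
        (fun t _ => by linarith [(hGmem t s ω).1])
  have hPint : ∀ s : Finset F,
      Integrable (fun ω => ∏ t, (1 - min 1 (∑ f ∈ s, W t f ω))) ℙ := by
    intro s
    refine Integrable.mono' (integrable_const 1) (hPmeas s).aestronglyMeasurable
      (Filter.Eventually.of_forall fun ω => ?_)
    rw [Real.norm_eq_abs, abs_le]
    exact ⟨by linarith [(hPmem s ω).1], (hPmem s ω).2⟩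
  have prodInt : ∀ s : Finset F,
      (∫ ω, ∏ t, (1 - min 1 (∑ f ∈ s, W t f ω))) =
        ∏ t, (1 - ∑ f ∈ s, γ * x f t * p f t) := by
    intro s
    have hφmeas : ∀ t : Fin T, Measurable fun v : F → ℝ => 1 - min 1 (∑ f ∈ s, v f) :=
      fun t => measurable_const.sub
        (measurable_const.min (Finset.measurable_sum s fun f _ => measurable_pi_apply f))
    have hcomp : iIndepFun
        (fun t ω => 1 - min 1 (∑ f ∈ s, W t f ω)) ℙ :=
      hindep.comp (fun _ (v : F → ℝ) => 1 - min 1 (∑ f ∈ s, v f)) hφmeas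
    rw [integral_finset_prod_of_iIndepFun' (fun t ω => 1 - min 1 (∑ f ∈ s, W t f ω))
      (fun t => measurable_const.sub (hGmeas t s)) hcomp univ]
    refine Finset.prod_congr rfl fun t _ => ?_
    rw [integral_sub (integrable_const 1) (hGint t s), integral_const, (round t s).1]
    simp
  -- pointwise structure of H
  have hrw : ∀ (s : Finset F) (t : Fin T) (ω : Ω),
      (1 : ℝ) - min 1 (∑ f ∈ s, W t f ω) =
        if (∀ f ∈ s, W t f ω = 0) then 1 else 0 := by
    intro s t ω
    rw [min_one_sum_eq_ite' s (fun f => W t f ω) (fun f => hW01 t f ω)]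
    by_cases hc : ∀ f ∈ s, W t f ω = 0
    · rw [if_pos hc, if_pos hc]; norm_num
    · rw [if_neg hc, if_neg hc]; norm_num
  have hprodite : ∀ (s : Finset F) (ω : Ω),
      (∏ t, (1 - min 1 (∑ f ∈ s, W t f ω))) =
        if (∀ t : Fin T, ∀ f ∈ s, W t f ω = 0) then 1 else 0 := by
    intro s ω
    rw [Finset.prod_congr rfl fun t _ => hrw s t ω, prod_ite_01']
    by_cases h : ∀ t : Fin T, ∀ f ∈ s, W t f ω = 0
    · rw [if_pos h, if_pos h]
    · rw [if_neg h, if_neg h]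
  have hHite : ∀ i ω, H i ω = if (∀ t : Fin T, ∀ f ∈ Fi i, W t f ω = 0) then 0 else 1 := by
    intro i ω
    rw [hH]
    have hsum : (∑ t, ∑ f ∈ Fi i, W t f ω) = ∑ q ∈ univ ×ˢ Fi i, W q.1 q.2 ω := by
      rw [Finset.sum_product]
    rw [hsum, min_one_sum_eq_ite' (univ ×ˢ Fi i) (fun q => W q.1 q.2 ω)
      (fun q => hW01 q.1 q.2 ω)]
    have hiff : (∀ q ∈ univ ×ˢ Fi i, W q.1 q.2 ω = 0) ↔
        (∀ t : Fin T, ∀ f ∈ Fi i, W t f ω = 0) := by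
      constructor
      · intro hall t f hf
        exact hall (t, f) (Finset.mem_product.mpr ⟨Finset.mem_univ t, hf⟩)
      · intro hall q hq
        exact hall q.1 q.2 (Finset.mem_product.mp hq).2
    by_cases h : ∀ t : Fin T, ∀ f ∈ Fi i, W t f ω = 0
    · rw [if_pos (hiff.mpr h), if_pos h]
    · rw [if_neg (fun hq => h (hiff.mp hq)), if_neg h]
  have hH01 : ∀ i ω, H i ω = 0 ∨ H i ω = 1 := by
    intro i ω
    rw [hHite]
    by_cases hc : ∀ t : Fin T, ∀ f ∈ Fi i, W t f ω = 0
    · exact Or.inl (if_pos hc)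
    · exact Or.inr (if_neg hc)
  have hHeq : ∀ i ω, H i ω = 1 - ∏ t, (1 - min 1 (∑ f ∈ Fi i, W t f ω)) := by
    intro i ω
    rw [hHite, hprodite]
    by_cases hc : ∀ t : Fin T, ∀ f ∈ Fi i, W t f ω = 0
    · rw [if_pos hc, if_pos hc]; norm_num
    · rw [if_neg hc, if_neg hc]; norm_num
  -- measurability and integrability of H
  have hHmeas : ∀ i, Measurable (H i) := by
    intro i
    have : H i = fun ω => min 1 (∑ t, ∑ f ∈ Fi i, W t f ω) := funext fun ω => hH i ω
    rw [this]
    exact measurable_const.min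
      (Finset.measurable_sum univ fun t _ => Finset.measurable_sum (Fi i) fun f _ => hWmeas t f)
  have hHmem : ∀ i ω, 0 ≤ H i ω ∧ H i ω ≤ 1 := by
    intro i ω
    rcases hH01 i ω with h | h <;> rw [h] <;> norm_num
  have hHint : ∀ i, Integrable (H i) ℙ := by
    intro i
    refine Integrable.mono' (integrable_const 1) (hHmeas i).aestronglyMeasurable
      (Filter.Eventually.of_forall fun ω => ?_)
    rw [Real.norm_eq_abs, abs_le]
    exact ⟨by linarith [(hHmem i ω).1], (hHmem i ω).2⟩
  have hHHint : ∀ i j, Integrable (fun ω => H i ω * H j ω) ℙ := by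
    intro i j
    refine Integrable.mono' (integrable_const 1)
      ((hHmeas i).mul (hHmeas j)).aestronglyMeasurable
      (Filter.Eventually.of_forall fun ω => ?_)
    rw [Real.norm_eq_abs, abs_le]
    constructor
    · nlinarith [(hHmem i ω).1, (hHmem j ω).1]
    · nlinarith [(hHmem i ω).1, (hHmem j ω).1, (hHmem i ω).2, (hHmem j ω).2]
  -- expectation of H i
  have hpi : ∀ i, (∫ ω, H i ω) = 1 - ∏ t, (1 - ∑ f ∈ Fi i, γ * x f t * p f t) := by
    intro i
    calc (∫ ω, H i ω)
        = ∫ ω, (1 - ∏ t, (1 - min 1 (∑ f ∈ Fi i, W t f ω))) :=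
          integral_congr_ae (Filter.Eventually.of_forall (hHeq i))
      _ = 1 - ∏ t, (1 - ∑ f ∈ Fi i, γ * x f t * p f t) := by
          rw [integral_sub (integrable_const 1) (hPint (Fi i)), integral_const,
            prodInt (Fi i)]
          simp
  have hsum_eq : ∀ i t, (∑ f ∈ Fi i, γ * x f t * p f t) = γ * ∑ f ∈ Fi i, x f t * p f t := by
    intro i t
    rw [Finset.mul_sum]
    exact Finset.sum_congr rfl fun f _ => by ring
  have hpi' : ∀ i, (∫ ω, H i ω) =
      1 - ∏ t, (1 - γ * ∑ f ∈ Fi i, x f t * p f t) := by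
    intro i
    rw [hpi i]
    congr 1
    exact Finset.prod_congr rfl fun t _ => by rw [hsum_eq]
  -- bound E[H i] ≤ γ and 0 ≤ E[H i]
  have hpi_le : ∀ i, (∫ ω, H i ω) ≤ γ := by
    intro i
    rw [hpi i]
    have h1 : 1 - (∑ t, ∑ f ∈ Fi i, γ * x f t * p f t) ≤
        ∏ t, (1 - ∑ f ∈ Fi i, γ * x f t * p f t) :=
      one_sub_sum_le_prod_aux' univ _
        (fun t _ => Finset.sum_nonneg fun f _ => hα0 f t)
        (fun t _ => (round t (Fi i)).2)
    have h2 : (∑ t, ∑ f ∈ Fi i, γ * x f t * p f t) ≤ γ := by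
      have hc := hcap i
      calc (∑ t, ∑ f ∈ Fi i, γ * x f t * p f t)
          = γ * ∑ t, ∑ f ∈ Fi i, x f t * p f t := by
            rw [Finset.mul_sum]
            exact Finset.sum_congr rfl fun t _ => hsum_eq i t
        _ ≤ γ * 1 := mul_le_mul_of_nonneg_left hc hγ.1
        _ = γ := mul_one γ
    linarith
  have hpi_nonneg : ∀ i, 0 ≤ ∫ ω, H i ω := by
    intro i
    rw [hpi i]
    have : (∏ t, (1 - ∑ f ∈ Fi i, γ * x f t * p f t)) ≤ 1 :=
      Finset.prod_le_one
        (fun t _ => by linarith [(round t (Fi i)).2])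
        (fun t _ => by linarith [Finset.sum_nonneg (fun f (_ : f ∈ Fi i) => hα0 f t)])
    linarith
  -- cross terms
  have hcross : ∀ i j, i ≠ j →
      (∫ ω, H i ω * H j ω) ≤ (∫ ω, H i ω) * (∫ ω, H j ω) := by
    intro i j hij
    have hdisjF : Disjoint (Fi i) (Fi j) := by
      rw [Finset.disjoint_left]
      intro f hfi hfj
      rw [hFi] at hfi hfj
      simp only [Finset.mem_filter] at hfi hfj
      exact hij (hfi.2 ▸ hfj.2 ▸ rfl)
    have hcross_pt : ∀ ω,
        (∏ t, (1 - min 1 (∑ f ∈ Fi i, W t f ω))) *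
          (∏ t, (1 - min 1 (∑ f ∈ Fi j, W t f ω))) =
        ∏ t, (1 - min 1 (∑ f ∈ Fi i ∪ Fi j, W t f ω)) := by
      intro ω
      rw [← Finset.prod_mul_distrib]
      refine Finset.prod_congr rfl fun t _ => ?_
      rw [min_one_sum_eq_ite' (Fi i) (fun f => W t f ω) (fun f => hW01 t f ω),
        min_one_sum_eq_ite' (Fi j) (fun f => W t f ω) (fun f => hW01 t f ω),
        min_one_sum_eq_ite' (Fi i ∪ Fi j) (fun f => W t f ω) (fun f => hW01 t f ω)]
      have hun : (∀ f ∈ Fi i ∪ Fi j, W t f ω = 0) ↔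
          (∀ f ∈ Fi i, W t f ω = 0) ∧ (∀ f ∈ Fi j, W t f ω = 0) := Finset.forall_mem_union
      by_cases h1 : ∀ f ∈ Fi i, W t f ω = 0 <;> by_cases h2 : ∀ f ∈ Fi j, W t f ω = 0
      · rw [if_pos h1, if_pos h2, if_pos (hun.mpr ⟨h1, h2⟩)]; ring
      · rw [if_pos h1, if_neg h2, if_neg (fun h => h2 (hun.mp h).2)]; ring
      · rw [if_neg h1, if_pos h2, if_neg (fun h => h1 (hun.mp h).1)]; ring
      · rw [if_neg h1, if_neg h2, if_neg (fun h => h1 (hun.mp h).1)]; ring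
    have hpt : ∀ ω, H i ω * H j ω =
        (∏ t, (1 - min 1 (∑ f ∈ Fi i ∪ Fi j, W t f ω))) + H i ω + H j ω - 1 := by
      intro ω
      have e1 := hHeq i ω
      have e2 := hHeq j ω
      have e3 := hcross_pt ω
      have f1 : (∏ t, (1 - min 1 (∑ f ∈ Fi i, W t f ω))) = 1 - H i ω := by linarith
      have f2 : (∏ t, (1 - min 1 (∑ f ∈ Fi j, W t f ω))) = 1 - H j ω := by linarith
      rw [f1, f2] at e3
      linear_combination e3
    have iAB : Integrable (fun ω =>
        (∏ t, (1 - min 1 (∑ f ∈ Fi i ∪ Fi j, W t f ω))) + H i ω) ℙ :=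
      (hPint _).add (hHint i)
    have iABC : Integrable (fun ω =>
        (∏ t, (1 - min 1 (∑ f ∈ Fi i ∪ Fi j, W t f ω))) + H i ω + H j ω) ℙ :=
      iAB.add (hHint j)
    have hint1 : (∫ ω, H i ω * H j ω) =
        (∫ ω, ∏ t, (1 - min 1 (∑ f ∈ Fi i ∪ Fi j, W t f ω))) +
          (∫ ω, H i ω) + (∫ ω, H j ω) - 1 := by
      calc (∫ ω, H i ω * H j ω)
          = ∫ ω, ((∏ t, (1 - min 1 (∑ f ∈ Fi i ∪ Fi j, W t f ω))) +
              H i ω + H j ω - 1) :=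
            integral_congr_ae (Filter.Eventually.of_forall hpt)
        _ = (∫ ω, ∏ t, (1 - min 1 (∑ f ∈ Fi i ∪ Fi j, W t f ω))) +
              (∫ ω, H i ω) + (∫ ω, H j ω) - 1 := by
            rw [integral_sub iABC (integrable_const 1),
              integral_add iAB (hHint j),
              integral_add (hPint _) (hHint i), integral_const]
            simp
    rw [hint1, prodInt (Fi i ∪ Fi j)]
    have hunion_sum : ∀ t, (∑ f ∈ Fi i ∪ Fi j, γ * x f t * p f t) =
        (∑ f ∈ Fi i, γ * x f t * p f t) + ∑ f ∈ Fi j, γ * x f t * p f t :=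
      fun t => Finset.sum_union hdisjF
    have hAB0 : ∀ t : Fin T, (0:ℝ) ≤ ∑ f ∈ Fi i, γ * x f t * p f t :=
      fun t => Finset.sum_nonneg fun f _ => hα0 f t
    have hAB0' : ∀ t : Fin T, (0:ℝ) ≤ ∑ f ∈ Fi j, γ * x f t * p f t :=
      fun t => Finset.sum_nonneg fun f _ => hα0 f t
    have hprodbound : (∏ t, (1 - ∑ f ∈ Fi i ∪ Fi j, γ * x f t * p f t)) ≤
        (∏ t, (1 - ∑ f ∈ Fi i, γ * x f t * p f t)) *
          ∏ t, (1 - ∑ f ∈ Fi j, γ * x f t * p f t) := by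
      rw [← Finset.prod_mul_distrib]
      refine Finset.prod_le_prod (fun t _ => ?_) (fun t _ => ?_)
      · have := (round t (Fi i ∪ Fi j)).2
        linarith
      · rw [hunion_sum t]
        nlinarith [hAB0 t, hAB0' t]
    have g1 : (∏ t, (1 - ∑ f ∈ Fi i, γ * x f t * p f t)) = 1 - ∫ ω, H i ω := by
      rw [hpi i]; ring
    have g2 : (∏ t, (1 - ∑ f ∈ Fi j, γ * x f t * p f t)) = 1 - ∫ ω, H j ω := by
      rw [hpi j]; ring
    rw [g1, g2] at hprodbound
    nlinarith [hprodbound]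
  -- variance computation
  refine ⟨fun i => ⟨hH01 i, hpi' i, hpi_le i⟩, ?_⟩
  set X : Ω → ℝ := fun ω => ∑ i, H i ω with hX
  have hXmeas : Measurable X := Finset.measurable_sum univ fun i _ => hHmeas i
  have hXbound : ∀ ω, ‖X ω‖ ≤ (Fintype.card I : ℝ) := by
    intro ω
    rw [Real.norm_eq_abs, abs_le]
    constructor
    · have : (0:ℝ) ≤ X ω := Finset.sum_nonneg fun i _ => (hHmem i ω).1
      have hcard : (0:ℝ) ≤ (Fintype.card I : ℝ) := Nat.cast_nonneg _
      linarith
    · calc X ω ≤ ∑ _i : I, (1:ℝ) := Finset.sum_le_sum fun i _ => (hHmem i ω).2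
        _ = (Fintype.card I : ℝ) := by simp [Finset.card_univ]
  have hXmem : MemLp X 2 ℙ :=
    (memLp_top_of_bound hXmeas.aestronglyMeasurable _
      (Filter.Eventually.of_forall hXbound)).mono_exponent le_top
  rw [variance_eq_sub hXmem]
  have hEX : (∫ ω, X ω) = ∑ i, ∫ ω, H i ω := integral_finset_sum univ fun i _ => hHint i
  have hEX2 : (∫ ω, (X ^ 2) ω) = ∑ i, ∑ j, ∫ ω, H i ω * H j ω := by
    have hpt : ∀ ω, (X ^ 2) ω = ∑ i, ∑ j, H i ω * H j ω := by
      intro ω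
      rw [Pi.pow_apply, sq, hX]
      exact Finset.sum_mul_sum univ univ _ _
    calc (∫ ω, (X ^ 2) ω) = ∫ ω, ∑ i, ∑ j, H i ω * H j ω :=
          integral_congr_ae (Filter.Eventually.of_forall hpt)
      _ = ∑ i, ∫ ω, ∑ j, H i ω * H j ω :=
          integral_finset_sum univ fun i _ =>
            integrable_finset_sum univ fun j _ => hHHint i j
      _ = ∑ i, ∑ j, ∫ ω, H i ω * H j ω :=
          Finset.sum_congr rfl fun i _ => integral_finset_sum univ fun j _ => hHHint i j
  have hdiag : ∀ i, (∫ ω, H i ω * H i ω) = ∫ ω, H i ω := by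
    intro i
    refine integral_congr_ae (Filter.Eventually.of_forall fun ω => ?_)
    rcases hH01 i ω with h | h <;> simp [h]
  set q : I → ℝ := fun i => ∫ ω, H i ω with hq
  have hkey : (∑ i, ∑ j, ∫ ω, H i ω * H j ω) ≤
      ∑ i, ∑ j, (if i = j then q i else q i * q j) := by
    refine Finset.sum_le_sum fun i _ => Finset.sum_le_sum fun j _ => ?_
    by_cases h : i = j
    · subst h
      rw [if_pos rfl, hdiag i]
    · rw [if_neg h]
      exact hcross i j h
  have hsq : (∫ ω, X ω) ^ 2 = ∑ i, ∑ j, q i * q j := by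
    rw [hEX, sq]
    exact Finset.sum_mul_sum univ univ _ _
  have hfinal : (∑ i, ∑ j, (if i = j then q i else q i * q j)) -
      (∑ i, ∑ j, q i * q j) = ∑ i, (q i - q i * q i) := by
    rw [← Finset.sum_sub_distrib]
    refine Finset.sum_congr rfl fun i _ => ?_
    rw [← Finset.sum_sub_distrib]
    have hterm : ∀ j, ((if i = j then q i else q i * q j) - q i * q j) =
        if i = j then q i - q i * q i else 0 := by
      intro j
      by_cases h : i = j
      · subst h; simp
      · simp [h]
    rw [Finset.sum_congr rfl fun j _ => hterm j, Finset.sum_ite_eq univ i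
      (fun _ => q i - q i * q i)]
    simp
  have hbound : (∑ i, (q i - q i * q i)) ≤
      min (1 / 2) γ * (1 - min (1 / 2) γ) * (Fintype.card I : ℝ) := by
    calc (∑ i, (q i - q i * q i))
        ≤ ∑ _i : I, min (1 / 2) γ * (1 - min (1 / 2) γ) := by
          refine Finset.sum_le_sum fun i _ => ?_
          have := pq_bound' γ (q i) (hpi_nonneg i) (hpi_le i) hγ.2
          nlinarith [this]
      _ = min (1 / 2) γ * (1 - min (1 / 2) γ) * (Fintype.card I : ℝ) := by
          rw [Finset.sum_const, Finset.card_univ, nsmul_eq_mul, mul_comm]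
  calc (∫ ω, (X ^ 2) ω) - (∫ ω, X ω) ^ 2
      = (∑ i, ∑ j, ∫ ω, H i ω * H j ω) - ∑ i, ∑ j, q i * q j := by
        rw [hEX2, hsq]
    _ ≤ (∑ i, ∑ j, (if i = j then q i else q i * q j)) - ∑ i, ∑ j, q i * q j := by
        linarith [hkey]
    _ = ∑ i, (q i - q i * q i) := hfinal
    _ ≤ min (1 / 2) γ * (1 - min (1 / 2) γ) * (Fintype.card I : ℝ) := hbound
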